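/- Let ℓ > 0, α > 0, d > 0, γ > 0, γ* > 0 with d·γ ≤ 2·γ*. Then there exists α₀ > 0, depending only on d, γ, γ*, such that for every u : [0,ℓ] → ℂ four times continuously differentiable and every v : [0,ℓ] → ℂ twice continuously differentiable with v(ℓ) = v'(ℓ) = 0, writing w = v(0) and z = v'(0): Re( ∫₀^ℓ ( −α·u''''(x)·conj(v(x)) + α·v''(x)·conj(u''(x)) ) dx − α·u'''(0)·conj(w) + α·u''(0)·conj(z) − γ·|w|² − d·γ·w·conj(z) − d·γ*·|z|² ) ≤ −α₀·(|w|² + |z|²). -/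

import Mathlib

open MeasureTheory ComplexConjugate

/-- Dissipativity of the hybrid operator `A`: under `d γ ≤ 2 γ*`, there exists `α₀ > 0`,
depending only on `d, γ, γ*`, such that for all admissible `u, v` (with `v(ℓ) = v'(ℓ) = 0`,
`w = v(0)`, `z = v'(0)`),
`Re( ∫₀^ℓ (−α u'''' conj v + α v'' conj u'') dx − α u'''(0) conj w + α u''(0) conj z
   − γ|w|² − d γ w conj z − d γ*|z|² ) ≤ -α₀ (|w|² + |z|²)`. -/
theorem hybrid_operator_dissipative (d γ γs : ℝ)
    (hd : 0 < d) (hγ : 0 < γ) (hγs : 0 < γs) (hyp : d * γ ≤ 2 * γs) :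
    ∃ α₀ > 0, ∀ ℓ α : ℝ, 0 < ℓ → 0 < α →
      ∀ u u1 u2 u3 u4 : ℝ → ℂ,
      (∀ x ∈ Set.Icc (0:ℝ) ℓ, HasDerivWithinAt u (u1 x) (Set.Icc 0 ℓ) x) →
      (∀ x ∈ Set.Icc (0:ℝ) ℓ, HasDerivWithinAt u1 (u2 x) (Set.Icc 0 ℓ) x) →
      (∀ x ∈ Set.Icc (0:ℝ) ℓ, HasDerivWithinAt u2 (u3 x) (Set.Icc 0 ℓ) x) →
      (∀ x ∈ Set.Icc (0:ℝ) ℓ, HasDerivWithinAt u3 (u4 x) (Set.Icc 0 ℓ) x) →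
      ContinuousOn u4 (Set.Icc 0 ℓ) →
      ∀ v v1 v2 : ℝ → ℂ,
      (∀ x ∈ Set.Icc (0:ℝ) ℓ, HasDerivWithinAt v (v1 x) (Set.Icc 0 ℓ) x) →
      (∀ x ∈ Set.Icc (0:ℝ) ℓ, HasDerivWithinAt v1 (v2 x) (Set.Icc 0 ℓ) x) →
      ContinuousOn v2 (Set.Icc 0 ℓ) →
      v ℓ = 0 → v1 ℓ = 0 →
      ((∫ x in (0:ℝ)..ℓ,
          (-(α : ℂ) * u4 x * conj (v x) + (α : ℂ) * v2 x * conj (u2 x))) -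
        (α : ℂ) * u3 0 * conj (v 0) + (α : ℂ) * u2 0 * conj (v1 0) -
        (γ : ℂ) * ‖v 0‖ ^ 2 - (d : ℂ) * (γ : ℂ) * v 0 * conj (v1 0) -
        (d : ℂ) * (γs : ℂ) * ‖v1 0‖ ^ 2).re ≤
      -α₀ * (‖v 0‖ ^ 2 + ‖v1 0‖ ^ 2) := by
  refine ⟨min (γ / 4) (d * γs / 3), lt_min (by positivity) (by positivity), ?_⟩
  intro ℓ α hℓ hα u u1 u2 u3 u4 hu1 hu2 hu3 hu4 hu4c v v1 v2 hv1 hv2 hv2c hvl hv1l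
  have huIcc : Set.uIcc (0:ℝ) ℓ = Set.Icc 0 ℓ := Set.uIcc_of_le hℓ.le
  -- continuity facts
  have hcu2 : ContinuousOn u2 (Set.Icc 0 ℓ) := fun x hx => (hu3 x hx).continuousWithinAt
  have hcu3 : ContinuousOn u3 (Set.Icc 0 ℓ) := fun x hx => (hu4 x hx).continuousWithinAt
  have hcv : ContinuousOn v (Set.Icc 0 ℓ) := fun x hx => (hv1 x hx).continuousWithinAt
  have hcv1 : ContinuousOn v1 (Set.Icc 0 ℓ) := fun x hx => (hv2 x hx).continuousWithinAt
  have hconjv : ∀ x ∈ Set.Icc (0:ℝ) ℓ,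
      HasDerivWithinAt (fun y => conj (v y)) (conj (v1 x)) (Set.Icc 0 ℓ) x :=
    fun x hx => (hv1 x hx).star
  have hconjv1 : ∀ x ∈ Set.Icc (0:ℝ) ℓ,
      HasDerivWithinAt (fun y => conj (v1 y)) (conj (v2 x)) (Set.Icc 0 ℓ) x :=
    fun x hx => (hv2 x hx).star
  -- integrabilities
  have hi_u4cv : IntervalIntegrable (fun x => u4 x * conj (v x)) volume 0 ℓ := by
    apply ContinuousOn.intervalIntegrable
    rw [huIcc]
    exact hu4c.mul (Complex.continuous_conj.comp_continuousOn hcv)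
  have hi_u2cv2 : IntervalIntegrable (fun x => u2 x * conj (v2 x)) volume 0 ℓ := by
    apply ContinuousOn.intervalIntegrable
    rw [huIcc]
    exact hcu2.mul (Complex.continuous_conj.comp_continuousOn hv2c)
  have hi_v2cu2 : IntervalIntegrable (fun x => v2 x * conj (u2 x)) volume 0 ℓ := by
    apply ContinuousOn.intervalIntegrable
    rw [huIcc]
    exact hv2c.mul (Complex.continuous_conj.comp_continuousOn hcu2)
  -- first integration by parts:
  -- ∫ u3 conj v1 = u3 ℓ conj(v ℓ) - u3 0 conj(v 0) - ∫ u4 conj v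
  have h1 : (∫ x in (0:ℝ)..ℓ, u3 x * conj (v1 x))
      = u3 ℓ * conj (v ℓ) - u3 0 * conj (v 0) - ∫ x in (0:ℝ)..ℓ, u4 x * conj (v x) := by
    have := intervalIntegral.integral_mul_deriv_eq_deriv_mul_of_hasDerivWithinAt
      (u := u3) (v := fun y => conj (v y)) (u' := u4) (v' := fun y => conj (v1 y))
      (a := 0) (b := ℓ)
      (by rw [huIcc]; exact hu4) (by rw [huIcc]; exact hconjv)
      (by apply ContinuousOn.intervalIntegrable; rw [huIcc]; exact hu4c)
      (by apply ContinuousOn.intervalIntegrable; rw [huIcc]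
          exact Complex.continuous_conj.comp_continuousOn hcv1)
    simpa using this
  -- second integration by parts:
  have h2 : (∫ x in (0:ℝ)..ℓ, u2 x * conj (v2 x))
      = u2 ℓ * conj (v1 ℓ) - u2 0 * conj (v1 0) - ∫ x in (0:ℝ)..ℓ, u3 x * conj (v1 x) := by
    have := intervalIntegral.integral_mul_deriv_eq_deriv_mul_of_hasDerivWithinAt
      (u := u2) (v := fun y => conj (v1 y)) (u' := u3) (v' := fun y => conj (v2 y))
      (a := 0) (b := ℓ)
      (by rw [huIcc]; exact hu3) (by rw [huIcc]; exact hconjv1)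
      (by apply ContinuousOn.intervalIntegrable; rw [huIcc]; exact hcu3)
      (by apply ContinuousOn.intervalIntegrable; rw [huIcc]
          exact Complex.continuous_conj.comp_continuousOn hv2c)
    simpa using this
  -- conclusion on the fourth derivative integral
  have key : (∫ x in (0:ℝ)..ℓ, u4 x * conj (v x))
      = -(u3 0 * conj (v 0)) + u2 0 * conj (v1 0) + ∫ x in (0:ℝ)..ℓ, u2 x * conj (v2 x) := by
    rw [h2, h1, hvl, hv1l]
    simp only [map_zero, mul_zero, zero_mul]
    ring
  -- linearity of the main integral
  have split : (∫ x in (0:ℝ)..ℓ,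
        (-(α : ℂ) * u4 x * conj (v x) + (α : ℂ) * v2 x * conj (u2 x)))
      = -(α : ℂ) * (∫ x in (0:ℝ)..ℓ, u4 x * conj (v x))
        + (α : ℂ) * (∫ x in (0:ℝ)..ℓ, v2 x * conj (u2 x)) := by
    have hia : IntervalIntegrable (fun x => -(α:ℂ) * u4 x * conj (v x)) volume 0 ℓ := by
      have := hi_u4cv.smul (-(α:ℂ))
      simpa [Pi.smul_def, Pi.neg_def, smul_eq_mul, mul_assoc] using this
    have hib : IntervalIntegrable (fun x => (α:ℂ) * v2 x * conj (u2 x)) volume 0 ℓ := by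
      have := hi_v2cu2.smul ((α:ℂ))
      simpa [Pi.smul_def, smul_eq_mul, mul_assoc] using this
    rw [intervalIntegral.integral_add hia hib, ← intervalIntegral.integral_const_mul,
      ← intervalIntegral.integral_const_mul]
    congr 1
    · exact intervalIntegral.integral_congr fun x _ => by ring
    · exact intervalIntegral.integral_congr fun x _ => by ring
  -- conjugation relation between the two second-order integrals
  have hconj_int : (∫ x in (0:ℝ)..ℓ, v2 x * conj (u2 x))
      = conj (∫ x in (0:ℝ)..ℓ, u2 x * conj (v2 x)) := by
    have hcj : ∀ f : ℝ → ℂ, (∫ x in (0:ℝ)..ℓ, conj (f x)) = conj (∫ x in (0:ℝ)..ℓ, f x) := by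
      intro f
      unfold intervalIntegral
      rw [map_sub, integral_conj, integral_conj]
    rw [← hcj]
    exact intervalIntegral.integral_congr (fun x _ => by simp [mul_comm])
  set w := v 0
  set z := v1 0
  set K := ∫ x in (0:ℝ)..ℓ, u2 x * conj (v2 x) with hK
  have main : ((∫ x in (0:ℝ)..ℓ,
          (-(α : ℂ) * u4 x * conj (v x) + (α : ℂ) * v2 x * conj (u2 x))) -
        (α : ℂ) * u3 0 * conj w + (α : ℂ) * u2 0 * conj z -
        (γ : ℂ) * ‖w‖ ^ 2 - (d : ℂ) * (γ : ℂ) * w * conj z -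
        (d : ℂ) * (γs : ℂ) * ‖z‖ ^ 2)
      = (α : ℂ) * (conj K - K)
        - (γ : ℂ) * ‖w‖ ^ 2 - (d : ℂ) * (γ : ℂ) * w * conj z
        - (d : ℂ) * (γs : ℂ) * ‖z‖ ^ 2 := by
    rw [split, key, hconj_int]
    ring
  rw [main]
  have hre : ((α : ℂ) * (conj K - K)
        - (γ : ℂ) * ‖w‖ ^ 2 - (d : ℂ) * (γ : ℂ) * w * conj z
        - (d : ℂ) * (γs : ℂ) * ‖z‖ ^ 2).re
      = - γ * ‖w‖ ^ 2 - d * γ * (w * conj z).re - d * γs * ‖z‖ ^ 2 := by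
    simp only [Complex.sub_re, Complex.add_re, Complex.mul_re, Complex.mul_im,
      Complex.conj_re, Complex.conj_im, Complex.ofReal_re, Complex.ofReal_im,
      ← Complex.ofReal_pow]
    ring
  rw [hre]
  -- now the real quadratic form estimate
  have habs : (w * conj z).re ≥ -(‖w‖ * ‖z‖) := by
    have h1 : |(w * conj z).re| ≤ ‖w * conj z‖ := Complex.abs_re_le_norm _
    have h2 : ‖w * conj z‖ = ‖w‖ * ‖z‖ := by
      rw [norm_mul, Complex.norm_conj]
    nlinarith [neg_abs_le (w * conj z).re]
  set a := ‖w‖; set b := ‖z‖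
  have ha : 0 ≤ a := norm_nonneg _
  have hb : 0 ≤ b := norm_nonneg _
  have hm1 : min (γ / 4) (d * γs / 3) ≤ γ / 4 := min_le_left _ _
  have hm2 : min (γ / 4) (d * γs / 3) ≤ d * γs / 3 := min_le_right _ _
  nlinarith [mul_nonneg hγ.le (sq_nonneg (3 * a - 2 * d * b)),
    mul_nonneg (mul_nonneg hd.le (sub_nonneg.mpr hyp)) (sq_nonneg b),
    mul_nonneg (mul_nonneg hd.le hγ.le) (mul_nonneg ha hb),
    sq_nonneg a, sq_nonneg b,
    mul_le_mul_of_nonneg_right habs.le (mul_nonneg hd.le hγ.le)]
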